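/- arXiv:0902.2535 — 6 statements merged into one kernel-verified Lean document; each statement's English description precedes it below -/
import Mathlib

section
/- The derivation action of Ψ on itself vanishes: Ψ.Ψ = 0, i.e., for all U, V ∈ V the endomorphism Ψ(U,V) annihilates the 4-multilinear form Ψ₀(X,Y,Z,W) = ⟪Ψ(X,Y)Z, W⟫ under the derivation action. -/
open scoped RealInnerProductSpace

noncomputable section

variable {V : Type*} [NormedAddCommGroup V] [InnerProductSpace ℝ V] [FiniteDimensional ℝ V]

/-- The orthogonal projection onto `D`, as a map `V → V`. -/
def projD (D : Submodule ℝ V) (X : V) : V := (D.orthogonalProjection X : V)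

/-- The bilinear form `h(X,Y) = ⟪πX, πY⟫`. -/
def hForm (D : Submodule ℝ V) (X Y : V) : ℝ := ⟪projD D X, projD D Y⟫

/-- The 2-form `ω(X,Y) = h(JX, Y)`. -/
def omForm (J : V →ₗ[ℝ] V) (D : Submodule ℝ V) (X Y : V) : ℝ := hForm D (J X) Y

/-- The standard Kähler curvature-type tensor `Π` of constant holomorphic sectional curvature. -/
def PiT (J : V →ₗ[ℝ] V) (U Vv W : V) : V :=
  (1/4 : ℝ) • (⟪Vv, W⟫ • U - ⟪U, W⟫ • Vv + ⟪J Vv, W⟫ • J U - ⟪J U, W⟫ • J Vv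
    - (2 * ⟪J U, Vv⟫) • J W)

/-- The curvature-type tensor `Φ`. -/
def PhiT (J : V →ₗ[ℝ] V) (D : Submodule ℝ V) (U Vv W : V) : V :=
  (1/8 : ℝ) • (⟪Vv, W⟫ • projD D U - ⟪U, W⟫ • projD D Vv
    + hForm D Vv W • U - hForm D U W • Vv
    + ⟪J Vv, W⟫ • projD D (J U) - ⟪J U, W⟫ • projD D (J Vv)
    + omForm J D Vv W • J U - omForm J D U W • J Vv
    - (2 * ⟪J U, Vv⟫) • projD D (J W) - (2 * omForm J D U Vv) • J W)

/-- The curvature-type tensor `Ψ(U,V)W = −ω(U,V)·J(πW)`. -/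
def PsiT (J : V →ₗ[ℝ] V) (D : Submodule ℝ V) (U Vv W : V) : V :=
  -(omForm J D U Vv) • J (projD D W)

/-- The derivation action of an endomorphism `A` on a bilinear form `T`. -/
def der2 (A : V → V) (T : V → V → ℝ) (X Y : V) : ℝ := -T (A X) Y - T X (A Y)

/-- The derivation action of an endomorphism `A` on a 4-multilinear form `T`. -/
def der4 (A : V → V) (T : V → V → V → V → ℝ) (X Y Z W : V) : ℝ :=
  -T (A X) Y Z W - T X (A Y) Z W - T X Y (A Z) W - T X Y Z (A W)

/-- The 4-form `S₀(X,Y,Z,W) = ⟪S(X,Y)Z, W⟫` associated with an endomorphism-valued 2-form. -/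
def form4 (S : V → V → V → V) (X Y Z W : V) : ℝ := ⟪S X Y Z, W⟫

/-- The 6-multilinear form `(R.S)(U,V,X,Y,Z,W) = (R(U,V).S₀)(X,Y,Z,W)`. -/
def dotRS (R S : V → V → V → V) (U Vv X Y Z W : V) : ℝ :=
  der4 (R U Vv) (form4 S) X Y Z W

theorem stmt_1 {V : Type*} [NormedAddCommGroup V] [InnerProductSpace ℝ V]
    [FiniteDimensional ℝ V]
    (J : V →ₗ[ℝ] V) (hJ2 : ∀ X : V, J (J X) = -X)
    (hJg : ∀ X Y : V, ⟪J X, J Y⟫ = ⟪X, Y⟫)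
    (D : Submodule ℝ V) (hD2 : Module.finrank ℝ ↥D = 2)
    (hJD : ∀ X ∈ D, J X ∈ D) :
    ∀ U Vv X Y Z W : V,
      dotRS (PsiT J D) (PsiT J D) U Vv X Y Z W = 0 := by
  intro U Vv X Y Z W
  have hmem : ∀ A : V, projD D A ∈ D := fun A => (D.orthogonalProjection A).2
  have hfix : ∀ A : V, A ∈ D → projD D A = A := fun A hA =>
    Submodule.starProjection_eq_self_iff.mpr hA
  have hidem : ∀ A : V, projD D (projD D A) = projD D A := fun A => hfix _ (hmem A)
  have hJpi : ∀ A : V, projD D (J (projD D A)) = J (projD D A) :=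
    fun A => hfix _ (hJD _ (hmem A))
  have hsa : ∀ A B : V, ⟪projD D A, B⟫ = ⟪projD D A, projD D B⟫ := by
    intro A B
    have h := hidem B
    simp only [projD] at h ⊢
    change ⟪D.starProjection A, B⟫ = ⟪D.starProjection A, D.starProjection B⟫
    change D.starProjection (D.starProjection B) = D.starProjection B at h
    rw [Submodule.inner_starProjection_left_eq_right,
      Submodule.inner_starProjection_left_eq_right, h]
  have hplin : ∀ (r : ℝ) (A : V), projD D (r • A) = r • projD D A := by
    intro r A; simp [projD]
  have hpneg : ∀ A : V, projD D (-A) = -projD D A := by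
    intro A; simp [projD]
  have omsmul : ∀ (r : ℝ) (A B : V), omForm J D (r • A) B = r * omForm J D A B := by
    intro r A B
    simp [omForm, hForm, map_smul, hplin, real_inner_smul_left]
  have omneg : ∀ A B : V, omForm J D (-A) B = -omForm J D A B := by
    intro A B
    simp [omForm, hForm, map_neg, hpneg, inner_neg_left]
  have omsmul2 : ∀ (r : ℝ) (A B : V), omForm J D A (r • B) = r * omForm J D A B := by
    intro r A B
    simp [omForm, hForm, hplin, real_inner_smul_right]
  have omneg2 : ∀ A B : V, omForm J D A (-B) = -omForm J D A B := by
    intro A B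
    simp [omForm, hForm, hpneg, inner_neg_right]
  have k1 : ∀ A B : V, omForm J D (J (projD D A)) B = -⟪projD D A, projD D B⟫ := by
    intro A B
    simp only [omForm, hForm, hJ2, hpneg, hidem, inner_neg_left]
  have hsa' : ∀ A B : V, ⟪projD D A, B⟫ = ⟪A, projD D B⟫ := by
    intro A B
    simp only [projD]
    exact Submodule.inner_starProjection_left_eq_right D A B
  have k2 : ∀ A B : V, omForm J D A (J (projD D B)) = ⟪projD D A, projD D B⟫ := by
    intro A B
    simp only [omForm, hForm]
    rw [hJpi, hsa', hJpi, hJg, real_inner_comm, hsa, real_inner_comm]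
  have k3 : ∀ A B : V, ⟪J (projD D (J (projD D A))), B⟫ = -⟪projD D A, B⟫ := by
    intro A B
    rw [hJpi, hJ2, inner_neg_left]
  have k4 : ∀ A B : V, ⟪J (projD D A), J (projD D B)⟫ = ⟪projD D A, B⟫ := by
    intro A B
    rw [hJg, ← hsa]
  simp only [dotRS, der4, form4, PsiT, neg_smul, neg_neg, omneg, omsmul, omneg2,
    omsmul2, hpneg, hplin, map_neg, map_smul, inner_neg_left, inner_neg_right,
    real_inner_smul_left, real_inner_smul_right, k1, k2, k3, k4]
  ring
end
end

section
/- The derivation action of Ψ annihilates both Π and Φ: Ψ.Π = 0 and Ψ.Φ = 0. -/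
open scoped RealInnerProductSpace

noncomputable section

variable {V : Type*} [NormedAddCommGroup V] [InnerProductSpace ℝ V] [FiniteDimensional ℝ V]

theorem stmt_2 {V : Type*} [NormedAddCommGroup V] [InnerProductSpace ℝ V]
    [FiniteDimensional ℝ V]
    (J : V →ₗ[ℝ] V) (hJ2 : ∀ X : V, J (J X) = -X)
    (hJg : ∀ X Y : V, ⟪J X, J Y⟫ = ⟪X, Y⟫)
    (D : Submodule ℝ V) (hD2 : Module.finrank ℝ ↥D = 2)
    (hJD : ∀ X ∈ D, J X ∈ D) :
    (∀ U Vv X Y Z W : V, dotRS (PsiT J D) (PiT J) U Vv X Y Z W = 0) ∧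
    (∀ U Vv X Y Z W : V, dotRS (PsiT J D) (PhiT J D) U Vv X Y Z W = 0) := by
  -- basic lemmas
  have hpp : ∀ x : V, projD D (projD D x) = projD D x := by
    intro x
    exact Submodule.starProjection_eq_self_iff.2 (D.starProjection_apply_mem x)
  have hmove : ∀ x y : V, ⟪x, projD D y⟫ = ⟪projD D x, y⟫ := fun x y =>
    (D.inner_starProjection_left_eq_right x y).symm
  have hskew : ∀ x y : V, ⟪x, J y⟫ = -⟪J x, y⟫ := by
    intro x y
    have := hJg (J x) y
    rw [hJ2 x] at this
    rw [← this]
    simp [inner_neg_left]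
  have hskew' : ∀ x y : V, ⟪J x, y⟫ = -⟪x, J y⟫ := by
    intro x y; rw [hskew]; ring
  have hpJ : ∀ x : V, projD D (J x) = J (projD D x) := by
    intro x
    refine Submodule.eq_starProjection_of_mem_of_inner_eq_zero (v := J (projD D x))
      (hJD _ (D.starProjection_apply_mem x)) ?_
    intro w hw
    have h1 : ⟪x - projD D x, J w⟫ = 0 := by
      have := Submodule.starProjection_inner_eq_zero x (J w) (hJD w hw)
      exact this
    rw [show J x - J (projD D x) = J (x - projD D x) from (map_sub J x _).symm,
      hskew', h1, neg_zero]
  have hsm : ∀ (c : ℝ) (x : V), projD D (c • x) = c • projD D x := by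
    intro c x; simp [projD]
  have hadd : ∀ x y : V, projD D (x + y) = projD D x + projD D y := by
    intro x y; simp [projD]
  have hsub : ∀ x y : V, projD D (x - y) = projD D x - projD D y := by
    intro x y; simp [projD]
  have hneg : ∀ x : V, projD D (-x) = -projD D x := by
    intro x; simp [projD]
  constructor
  · intro U Vv X Y Z W
    simp only [dotRS, der4, form4, PsiT, PiT, omForm, hForm,
      real_inner_smul_left, real_inner_smul_right, inner_add_left, inner_add_right,
      inner_sub_left, inner_sub_right, inner_neg_left, inner_neg_right,
      map_add, map_sub, map_smul, map_neg, smul_add, smul_sub, smul_neg,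
      smul_smul, neg_smul, hadd, hsub, hneg, hsm, hpJ, hpp, hJ2, hskew, hmove, hJg,
      starRingEnd_apply, star_trivial]
    ring
  · intro U Vv X Y Z W
    simp only [dotRS, der4, form4, PsiT, PhiT, omForm, hForm,
      real_inner_smul_left, real_inner_smul_right, inner_add_left, inner_add_right,
      inner_sub_left, inner_sub_right, inner_neg_left, inner_neg_right,
      map_add, map_sub, map_smul, map_neg, smul_add, smul_sub, smul_neg,
      smul_smul, neg_smul, hadd, hsub, hneg, hsm, hpJ, hpp, hJ2, hskew, hmove, hJg,
      starRingEnd_apply, star_trivial]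
    ring
end
end

section
/- The derivation actions of Π and 2Φ on Ψ coincide: Π.Ψ = 2(Φ.Ψ). -/
open scoped RealInnerProductSpace

noncomputable section

variable {V : Type*} [NormedAddCommGroup V] [InnerProductSpace ℝ V] [FiniteDimensional ℝ V]

section Aux

variable {V : Type*} [NormedAddCommGroup V] [InnerProductSpace ℝ V] [FiniteDimensional ℝ V]

theorem projD_add (D : Submodule ℝ V) (x y : V) :
    projD D (x + y) = projD D x + projD D y := by
  simp [projD]

theorem projD_smul (D : Submodule ℝ V) (c : ℝ) (x : V) :
    projD D (c • x) = c • projD D x := by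
  simp [projD]

theorem projD_sub (D : Submodule ℝ V) (x y : V) :
    projD D (x - y) = projD D x - projD D y := by
  simp [projD]

theorem projD_neg (D : Submodule ℝ V) (x : V) :
    projD D (-x) = -projD D x := by
  simp [projD]

theorem projD_idem (D : Submodule ℝ V) (x : V) :
    projD D (projD D x) = projD D x := by
  simpa [projD] using
    congrArg (Submodule.subtype D)
      (Submodule.orthogonalProjection_mem_subspace_eq_self (D.orthogonalProjection x))

theorem projD_adj (D : Submodule ℝ V) (x y : V) :
    ⟪projD D x, y⟫ = ⟪x, projD D y⟫ :=
  D.inner_starProjection_left_eq_right x y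

end Aux

theorem stmt_3 {V : Type*} [NormedAddCommGroup V] [InnerProductSpace ℝ V]
    [FiniteDimensional ℝ V]
    (J : V →ₗ[ℝ] V) (hJ2 : ∀ X : V, J (J X) = -X)
    (hJg : ∀ X Y : V, ⟪J X, J Y⟫ = ⟪X, Y⟫)
    (D : Submodule ℝ V) (hD2 : Module.finrank ℝ ↥D = 2)
    (hJD : ∀ X ∈ D, J X ∈ D) :
    ∀ U Vv X Y Z W : V,
      dotRS (PiT J) (PsiT J D) U Vv X Y Z W
        = 2 * dotRS (PhiT J D) (PsiT J D) U Vv X Y Z W := by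
  have Jskew : ∀ x y : V, ⟪J x, y⟫ = -⟪x, J y⟫ := by
    intro x y
    have : ⟪J x, J (J y)⟫ = ⟪x, J y⟫ := hJg x (J y)
    rw [hJ2 y, inner_neg_right] at this
    linarith
  have PJ : ∀ x : V, projD D (J x) = J (projD D x) := by
    intro x
    refine D.eq_starProjection_of_mem_of_inner_eq_zero
      (hJD _ (Submodule.coe_mem _)) (fun w hw => ?_)
    have h1 : J x - J (projD D x) = J (x - projD D x) := by
      rw [map_sub]
    rw [h1, Jskew, projD]
    have h2 : x - (D.orthogonalProjection x : V) ∈ Dᗮ :=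
      D.sub_starProjection_mem_orthogonal x
    have := h2 (J w) (hJD w hw)
    rw [real_inner_comm] at this
    simpa [projD] using this
  have gswap : ∀ a b : V, ⟪a, b⟫ = ⟪b, a⟫ := fun a b => (real_inner_comm b a)
  have gswapP : ∀ a b : V, ⟪a, projD D b⟫ = ⟪b, projD D a⟫ := by
    intro a b
    rw [real_inner_comm, projD_adj]
  have gswapJ : ∀ a b : V, ⟪a, J b⟫ = -⟪b, J a⟫ := by
    intro a b
    rw [real_inner_comm, Jskew]
  have gswapJP : ∀ a b : V, ⟪a, J (projD D b)⟫ = -⟪b, J (projD D a)⟫ := by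
    intro a b
    rw [real_inner_comm, Jskew, projD_adj, PJ]
  intro U Vv X Y Z W
  simp only [dotRS, der4, form4, PsiT, PiT, PhiT, omForm, hForm,
    map_add, map_sub, map_smul, map_neg, hJ2,
    projD_add, projD_sub, projD_smul, projD_neg, projD_idem, PJ,
    inner_add_left, inner_add_right, inner_sub_left, inner_sub_right,
    inner_neg_left, inner_neg_right, real_inner_smul_left, real_inner_smul_right,
    Jskew, projD_adj, smul_eq_mul, neg_smul, smul_neg, smul_add, smul_sub,
    neg_neg, neg_add, neg_sub, mul_neg, neg_mul]
  simp only [gswap Vv U, gswapP Vv U, gswapJ Vv U, gswapJP Vv U,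
    gswap X U, gswapP X U, gswapJ X U, gswapJP X U,
    gswap X Vv, gswapP X Vv, gswapJ X Vv, gswapJP X Vv,
    gswap Y U, gswapP Y U, gswapJ Y U, gswapJP Y U,
    gswap Y Vv, gswapP Y Vv, gswapJ Y Vv, gswapJP Y Vv,
    gswap Y X, gswapP Y X, gswapJ Y X, gswapJP Y X,
    gswap Z U, gswapP Z U, gswapJ Z U, gswapJP Z U,
    gswap Z Vv, gswapP Z Vv, gswapJ Z Vv, gswapJP Z Vv,
    gswap Z X, gswapP Z X, gswapJ Z X, gswapJP Z X,
    gswap Z Y, gswapP Z Y, gswapJ Z Y, gswapJP Z Y,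
    gswap W U, gswapP W U, gswapJ W U, gswapJP W U,
    gswap W Vv, gswapP W Vv, gswapJ W Vv, gswapJP W Vv,
    gswap W X, gswapP W X, gswapJ W X, gswapJP W X,
    gswap W Y, gswapP W Y, gswapJ W Y, gswapJP W Y,
    gswap W Z, gswapP W Z, gswapJ W Z, gswapJP W Z]
  ring
end
end

section
/- The derivation action of Π on itself vanishes: Π.Π = 0. -/
open scoped RealInnerProductSpace

noncomputable section

variable {V : Type*} [NormedAddCommGroup V] [InnerProductSpace ℝ V] [FiniteDimensional ℝ V]

theorem stmt_6 {V : Type*} [NormedAddCommGroup V] [InnerProductSpace ℝ V]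
    [FiniteDimensional ℝ V]
    (J : V →ₗ[ℝ] V) (hJ2 : ∀ X : V, J (J X) = -X)
    (hJg : ∀ X Y : V, ⟪J X, J Y⟫ = ⟪X, Y⟫) :
    ∀ U Vv X Y Z W : V,
      dotRS (PiT J) (PiT J) U Vv X Y Z W = 0 := by
  have hsk : ∀ a b : V, ⟪a, J b⟫ = -⟪J a, b⟫ := by
    intro a b; rw [← hJg a (J b), hJ2 b, inner_neg_right]
  have hw : ∀ a b : V, ⟪J a, b⟫ = -⟪J b, a⟫ := by
    intro a b
    have := hsk b a
    have h2 := real_inner_comm (J a) b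
    linarith
  have hw0 : ∀ a : V, ⟪J a, a⟫ = 0 := by
    intro a; have := hw a a; linarith
  intro U Vv X Y Z W
  simp only [dotRS, der4, form4, PiT, map_smul, map_add, map_sub, map_neg, hJ2,
    inner_smul_left, inner_smul_right, inner_add_left, inner_add_right,
    inner_sub_left, inner_sub_right, inner_neg_left, inner_neg_right,
    RCLike.star_def, conj_trivial, hJg, hsk, smul_eq_mul]
  ring_nf
  simp only [hw0,
    hw Vv U, hw X U, hw Y U, hw Z U, hw W U,
    hw X Vv, hw Y Vv, hw Z Vv, hw W Vv,
    hw Y X, hw Z X, hw W X,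
    hw Z Y, hw W Y, hw W Z,
    real_inner_comm Vv U, real_inner_comm X U, real_inner_comm Y U,
    real_inner_comm Z U, real_inner_comm W U,
    real_inner_comm X Vv, real_inner_comm Y Vv, real_inner_comm Z Vv,
    real_inner_comm W Vv,
    real_inner_comm Y X, real_inner_comm Z X, real_inner_comm W X,
    real_inner_comm Z Y, real_inner_comm W Y, real_inner_comm W Z]
  ring_nf
end
end

section
/- The tensor R = Π − 2Φ satisfies R.R = 0, i.e., (Π − 2Φ).(Π − 2Φ) = 0. -/
open scoped RealInnerProductSpace

noncomputable section

variable {V : Type*} [NormedAddCommGroup V] [InnerProductSpace ℝ V] [FiniteDimensional ℝ V]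

set_option maxHeartbeats 4000000 in
theorem stmt_13 {V : Type*} [NormedAddCommGroup V] [InnerProductSpace ℝ V]
    [FiniteDimensional ℝ V]
    (J : V →ₗ[ℝ] V) (hJ2 : ∀ X : V, J (J X) = -X)
    (hJg : ∀ X Y : V, ⟪J X, J Y⟫ = ⟪X, Y⟫)
    (D : Submodule ℝ V) (hD2 : Module.finrank ℝ ↥D = 2)
    (hJD : ∀ X ∈ D, J X ∈ D) :
    ∀ U Vv X Y Z W : V,
      dotRS (fun P Q W0 => PiT J P Q W0 - (2 : ℝ) • PhiT J D P Q W0) (fun P Q W0 => PiT J P Q W0 - (2 : ℝ) • PhiT J D P Q W0) U Vv X Y Z W = 0 := by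

  intro U Vv X Y Z W
  have hskew : ∀ a b : V, ⟪J a, b⟫ = -⟪a, J b⟫ := by
    intro a b
    rw [← hJg a (J b), hJ2 b, inner_neg_right, neg_neg]
  have Jsk : ∀ a b : V, ⟪a, J b⟫ = -⟪J a, b⟫ := by
    intro a b; rw [hskew]; ring
  have pJ : ∀ x : V, projD D (J x) = J (projD D x) := by
    intro x
    unfold projD
    show D.starProjection (J x) = J (D.starProjection x)
    apply Submodule.eq_starProjection_of_mem_of_inner_eq_zero
    · exact hJD _ (Submodule.coe_mem _)
    · intro w hw
      have h1 : x - D.starProjection x ∈ Dᗮ :=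
        Submodule.sub_starProjection_mem_orthogonal x
      rw [← map_sub J, hskew]
      have h2 := h1 (J w) (hJD w hw)
      rw [real_inner_comm] at h2
      rw [h2, neg_zero]
  have pp : ∀ x : V, projD D (projD D x) = projD D x := fun x =>
    Submodule.starProjection_eq_self_iff.mpr (Submodule.coe_mem (D.orthogonalProjectionOnto x))
  have psym : ∀ x y : V, ⟪x, projD D y⟫ = ⟪projD D x, y⟫ := fun x y =>
    (Submodule.inner_starProjection_left_eq_right D x y).symm
  have padd : ∀ x y : V, projD D (x + y) = projD D x + projD D y := fun x y => by
    simp [projD]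
  have psub : ∀ x y : V, projD D (x - y) = projD D x - projD D y := fun x y => by
    simp [projD]
  have psmul : ∀ (c : ℝ) (x : V), projD D (c • x) = c • projD D x := fun c x => by
    simp [projD]
  have pneg : ∀ x : V, projD D (-x) = -projD D x := fun x => by
    simp [projD]
  have hsw1 : ∀ a b : V, ⟪b, a⟫ = ⟪a, b⟫ := fun a b => real_inner_comm a b
  have hswJ : ∀ a b : V, ⟪J b, a⟫ = -⟪J a, b⟫ := fun a b => by
    rw [hskew b a, real_inner_comm]
  have hswP : ∀ a b : V, ⟪projD D b, a⟫ = ⟪projD D a, b⟫ := fun a b => by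
    rw [real_inner_comm, psym]
  have hswJP : ∀ a b : V, ⟪J (projD D b), a⟫ = -⟪J (projD D a), b⟫ := fun a b => by
    rw [real_inner_comm, Jsk, psym, pJ]
  have hdJ : ∀ a : V, ⟪J a, a⟫ = 0 := fun a => by
    have h1 := hskew a a
    have h2 := real_inner_comm a (J a)
    linarith
  have hdJP : ∀ a : V, ⟪J (projD D a), a⟫ = 0 := fun a => by
    have h1 := hswJP a a
    linarith
  have s0a := hsw1 U Vv
  have s0b := hswJ U Vv
  have s0c := hswP U Vv
  have s0d := hswJP U Vv
  have s1a := hsw1 U X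
  have s1b := hswJ U X
  have s1c := hswP U X
  have s1d := hswJP U X
  have s2a := hsw1 U Y
  have s2b := hswJ U Y
  have s2c := hswP U Y
  have s2d := hswJP U Y
  have s3a := hsw1 U Z
  have s3b := hswJ U Z
  have s3c := hswP U Z
  have s3d := hswJP U Z
  have s4a := hsw1 U W
  have s4b := hswJ U W
  have s4c := hswP U W
  have s4d := hswJP U W
  have s5a := hsw1 Vv X
  have s5b := hswJ Vv X
  have s5c := hswP Vv X
  have s5d := hswJP Vv X
  have s6a := hsw1 Vv Y
  have s6b := hswJ Vv Y
  have s6c := hswP Vv Y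
  have s6d := hswJP Vv Y
  have s7a := hsw1 Vv Z
  have s7b := hswJ Vv Z
  have s7c := hswP Vv Z
  have s7d := hswJP Vv Z
  have s8a := hsw1 Vv W
  have s8b := hswJ Vv W
  have s8c := hswP Vv W
  have s8d := hswJP Vv W
  have s9a := hsw1 X Y
  have s9b := hswJ X Y
  have s9c := hswP X Y
  have s9d := hswJP X Y
  have s10a := hsw1 X Z
  have s10b := hswJ X Z
  have s10c := hswP X Z
  have s10d := hswJP X Z
  have s11a := hsw1 X W
  have s11b := hswJ X W
  have s11c := hswP X W
  have s11d := hswJP X W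
  have s12a := hsw1 Y Z
  have s12b := hswJ Y Z
  have s12c := hswP Y Z
  have s12d := hswJP Y Z
  have s13a := hsw1 Y W
  have s13b := hswJ Y W
  have s13c := hswP Y W
  have s13d := hswJP Y W
  have s14a := hsw1 Z W
  have s14b := hswJ Z W
  have s14c := hswP Z W
  have s14d := hswJP Z W
  have dUa := hdJ U
  have dUb := hdJP U
  have dVva := hdJ Vv
  have dVvb := hdJP Vv
  have dXa := hdJ X
  have dXb := hdJP X
  have dYa := hdJ Y
  have dYb := hdJP Y
  have dZa := hdJ Z
  have dZb := hdJP Z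
  have dWa := hdJ W
  have dWb := hdJP W
  simp only [dotRS, der4, form4, PiT, PhiT, hForm, omForm]
  simp only [inner_add_left, inner_add_right, inner_sub_left, inner_sub_right,
    real_inner_smul_left, real_inner_smul_right, inner_neg_left, inner_neg_right,
    map_add, map_sub, map_smul, map_neg, padd, psub, psmul, pneg, hJ2, pJ, pp, Jsk, psym]
  simp only [s0a, s0b, s0c, s0d, s1a, s1b, s1c, s1d, s2a, s2b, s2c, s2d, s3a, s3b, s3c, s3d, s4a, s4b, s4c, s4d, s5a, s5b, s5c, s5d, s6a, s6b, s6c, s6d, s7a, s7b, s7c, s7d, s8a, s8b, s8c, s8d, s9a, s9b, s9c, s9d, s10a, s10b, s10c, s10d, s11a, s11b, s11c, s11d, s12a, s12b, s12c, s12d, s13a, s13b, s13c, s13d, s14a, s14b, s14c, s14d, dUa, dUb, dVva, dVvb, dXa, dXb, dYa, dYb, dZa, dZb, dWa, dWb]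
  ring
end
end

section
/- The 4-multilinear form Φ₀(X,Y,Z,W) = ⟪Φ(X,Y)Z, W⟫ is a curvature tensor of Kähler type: it satisfies Φ₀(X,Y,Z,W) = −Φ₀(Y,X,Z,W), Φ₀(X,Y,Z,W) = −Φ₀(X,Y,W,Z), the pair symmetry Φ₀(X,Y,Z,W) = Φ₀(Z,W,X,Y), the first Bianchi identity Φ₀(X,Y,Z,W) + Φ₀(Y,Z,X,W) + Φ₀(Z,X,Y,W) = 0, and the J-invariance Φ₀(JX,JY,Z,W) = Φ₀(X,Y,Z,W). -/
open scoped RealInnerProductSpace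

set_option linter.unusedSectionVars false

noncomputable section

variable {V : Type*} [NormedAddCommGroup V] [InnerProductSpace ℝ V] [FiniteDimensional ℝ V]

/- ### Auxiliary lemmas -/

lemma projD_mem (D : Submodule ℝ V) (X : V) : projD D X ∈ D := SetLike.coe_mem (D.orthogonalProjection X)

lemma projD_of_mem (D : Submodule ℝ V) {X : V} (hX : X ∈ D) : projD D X = X := by
  unfold projD
  exact Submodule.starProjection_eq_self_iff.mpr hX

lemma inner_projD_left_eq_right (D : Submodule ℝ V) (u v : V) :
    ⟪projD D u, v⟫ = ⟪u, projD D v⟫ := Submodule.inner_starProjection_left_eq_right D u v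

lemma projD_comm (J : V →ₗ[ℝ] V) (hJ2 : ∀ X : V, J (J X) = -X)
    (hJg : ∀ X Y : V, ⟪J X, J Y⟫ = ⟪X, Y⟫)
    (D : Submodule ℝ V) (hJD : ∀ X ∈ D, J X ∈ D) (X : V) :
    projD D (J X) = J (projD D X) := by
  have skew : ∀ a b : V, ⟪J a, b⟫ = -⟪a, J b⟫ := by
    intro a b
    calc ⟪J a, b⟫ = ⟪J (J a), J b⟫ := (hJg _ _).symm
    _ = -⟪a, J b⟫ := by rw [hJ2]; simp
  refine Submodule.eq_starProjection_of_mem_of_inner_eq_zero (hJD _ (projD_mem D X)) ?_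
  intro w hw
  have h1 : J X - J (projD D X) = J (X - projD D X) := by rw [map_sub]
  rw [h1, skew]
  have h2 : X - projD D X ∈ Dᗮ := D.sub_starProjection_mem_orthogonal X
  have : ⟪X - projD D X, J w⟫ = 0 := by
    rw [real_inner_comm]; exact h2 _ (hJD _ hw)
  simp [this]

lemma hForm_eq (D : Submodule ℝ V) (a b : V) : hForm D a b = ⟪projD D a, b⟫ := by
  unfold hForm
  rw [inner_projD_left_eq_right, projD_of_mem D (projD_mem D b), ← inner_projD_left_eq_right]

/-- The model polynomial. -/
def Fpoly (g p gj pj : V → V → ℝ) (X Y Z W : V) : ℝ :=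
  (1/8 : ℝ) * (g Y Z * p X W - g X Z * p Y W + p Y Z * g X W - p X Z * g Y W
    + gj Y Z * pj X W - gj X Z * pj Y W + pj Y Z * gj X W - pj X Z * gj Y W
    - 2 * gj X Y * pj Z W - 2 * pj X Y * gj Z W)

section Abstract

variable (g p gj pj : V → V → ℝ)

lemma Fpoly_anti1 (hgj : ∀ a b : V, gj a b = -gj b a) (hpj : ∀ a b : V, pj a b = -pj b a)
    (X Y Z W : V) : Fpoly g p gj pj X Y Z W = -Fpoly g p gj pj Y X Z W := by
  unfold Fpoly
  rw [hgj Y X, hpj Y X]; ring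

lemma Fpoly_anti2 (hgj : ∀ a b : V, gj a b = -gj b a) (hpj : ∀ a b : V, pj a b = -pj b a)
    (X Y Z W : V) : Fpoly g p gj pj X Y Z W = -Fpoly g p gj pj X Y W Z := by
  unfold Fpoly
  rw [hgj W Z, hpj W Z]; ring

lemma Fpoly_pair (hg : ∀ a b : V, g a b = g b a) (hp : ∀ a b : V, p a b = p b a)
    (hgj : ∀ a b : V, gj a b = -gj b a) (hpj : ∀ a b : V, pj a b = -pj b a)
    (X Y Z W : V) : Fpoly g p gj pj X Y Z W = Fpoly g p gj pj Z W X Y := by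
  unfold Fpoly
  rw [hg W X, hg Z X, hg Z Y, hg W Y, hp Z Y, hp W Y, hp W X, hp Z X,
    hgj W X, hgj Z X, hgj Z Y, hgj W Y, hpj Z Y, hpj W Y, hpj W X, hpj Z X]
  ring

lemma Fpoly_bianchi (hg : ∀ a b : V, g a b = g b a) (hp : ∀ a b : V, p a b = p b a)
    (hgj : ∀ a b : V, gj a b = -gj b a) (hpj : ∀ a b : V, pj a b = -pj b a)
    (X Y Z W : V) :
    Fpoly g p gj pj X Y Z W + Fpoly g p gj pj Y Z X W + Fpoly g p gj pj Z X Y W = 0 := by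
  unfold Fpoly
  rw [hg Z X, hg Y X, hg Z Y, hp Z X, hp Y X, hp Z Y,
    hgj Z X, hgj Y X, hgj Z Y, hpj Z X, hpj Y X, hpj Z Y]
  ring

lemma Fpoly_Jinv (J : V → V)
    (hgJ : ∀ a b : V, g (J a) b = gj a b) (hpJ : ∀ a b : V, p (J a) b = pj a b)
    (hgjJ : ∀ a b : V, gj (J a) b = -g a b) (hpjJ : ∀ a b : V, pj (J a) b = -p a b)
    (hgJ2 : ∀ a b : V, g a (J b) = -gj a b) (hpJ2 : ∀ a b : V, p a (J b) = -pj a b)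
    (hgjJ2 : ∀ a b : V, gj a (J b) = g a b) (hpjJ2 : ∀ a b : V, pj a (J b) = p a b)
    (X Y Z W : V) : Fpoly g p gj pj (J X) (J Y) Z W = Fpoly g p gj pj X Y Z W := by
  unfold Fpoly
  simp only [hgJ, hpJ, hgjJ, hpjJ, hgJ2, hpJ2, hgjJ2, hpjJ2]
  ring

end Abstract

theorem stmt_18 {V : Type*} [NormedAddCommGroup V] [InnerProductSpace ℝ V]
    [FiniteDimensional ℝ V]
    (J : V →ₗ[ℝ] V) (hJ2 : ∀ X : V, J (J X) = -X)
    (hJg : ∀ X Y : V, ⟪J X, J Y⟫ = ⟪X, Y⟫)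
    (D : Submodule ℝ V) (hD2 : Module.finrank ℝ ↥D = 2)
    (hJD : ∀ X ∈ D, J X ∈ D) :
    (∀ X Y Z W : V, form4 (PhiT J D) X Y Z W = -form4 (PhiT J D) Y X Z W) ∧
    (∀ X Y Z W : V, form4 (PhiT J D) X Y Z W = -form4 (PhiT J D) X Y W Z) ∧
    (∀ X Y Z W : V, form4 (PhiT J D) X Y Z W = form4 (PhiT J D) Z W X Y) ∧
    (∀ X Y Z W : V,
      form4 (PhiT J D) X Y Z W + form4 (PhiT J D) Y Z X W
        + form4 (PhiT J D) Z X Y W = 0) ∧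
    (∀ X Y Z W : V, form4 (PhiT J D) (J X) (J Y) Z W = form4 (PhiT J D) X Y Z W) := by
  have skew : ∀ a b : V, ⟪J a, b⟫ = -⟪a, J b⟫ := by
    intro a b
    calc ⟪J a, b⟫ = ⟪J (J a), J b⟫ := (hJg _ _).symm
    _ = -⟪a, J b⟫ := by rw [hJ2]; simp
  set g : V → V → ℝ := fun a b => ⟪a, b⟫ with hgdef
  set p : V → V → ℝ := fun a b => ⟪projD D a, b⟫ with hpdef
  set gj : V → V → ℝ := fun a b => ⟪J a, b⟫ with hgjdef
  set pj : V → V → ℝ := fun a b => ⟪J (projD D a), b⟫ with hpjdef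
  have pcomm := projD_comm J hJ2 hJg D hJD
  have om_eq : ∀ a b : V, omForm J D a b = pj a b := by
    intro a b
    rw [omForm, hForm_eq, pcomm, hpjdef]
  have hexp : ∀ X Y Z W : V, form4 (PhiT J D) X Y Z W = Fpoly g p gj pj X Y Z W := by
    intro X Y Z W
    simp only [form4, PhiT, Fpoly, hForm_eq, om_eq, pcomm, hgdef, hpdef, hgjdef, hpjdef,
      real_inner_smul_left, inner_sub_left, inner_add_left]
  -- symmetry facts
  have hg : ∀ a b : V, g a b = g b a := fun a b => real_inner_comm b a
  have hp : ∀ a b : V, p a b = p b a := by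
    intro a b
    simp only [hpdef]
    rw [inner_projD_left_eq_right, real_inner_comm]
  have hgj : ∀ a b : V, gj a b = -gj b a := by
    intro a b
    simp only [hgjdef]
    rw [skew, real_inner_comm]
  have hpj : ∀ a b : V, pj a b = -pj b a := by
    intro a b
    simp only [hpjdef]
    rw [skew, inner_projD_left_eq_right, pcomm, real_inner_comm]
  have hgJ : ∀ a b : V, g (J a) b = gj a b := fun a b => rfl
  have hpJ : ∀ a b : V, p (J a) b = pj a b := by
    intro a b; simp only [hpdef, hpjdef, pcomm]
  have hgjJ : ∀ a b : V, gj (J a) b = -g a b := by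
    intro a b; simp only [hgjdef, hgdef, hJ2]; simp
  have hpjJ : ∀ a b : V, pj (J a) b = -p a b := by
    intro a b; simp only [hpjdef, hpdef, pcomm, hJ2]; simp
  have hgJ2 : ∀ a b : V, g a (J b) = -gj a b := by
    intro a b; simp only [hgdef, hgjdef]; rw [skew]; ring
  have hpJ2 : ∀ a b : V, p a (J b) = -pj a b := by
    intro a b; simp only [hpdef, hpjdef]; rw [skew]; ring
  have hgjJ2 : ∀ a b : V, gj a (J b) = g a b := by
    intro a b; simp only [hgjdef, hgdef, hJg]
  have hpjJ2 : ∀ a b : V, pj a (J b) = p a b := by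
    intro a b; simp only [hpjdef, hpdef, hJg]
  refine ⟨?_, ?_, ?_, ?_, ?_⟩
  · intro X Y Z W
    rw [hexp, hexp]; exact Fpoly_anti1 g p gj pj hgj hpj X Y Z W
  · intro X Y Z W
    rw [hexp, hexp]; exact Fpoly_anti2 g p gj pj hgj hpj X Y Z W
  · intro X Y Z W
    rw [hexp, hexp]; exact Fpoly_pair g p gj pj hg hp hgj hpj X Y Z W
  · intro X Y Z W
    rw [hexp, hexp, hexp]; exact Fpoly_bianchi g p gj pj hg hp hgj hpj X Y Z W
  · intro X Y Z W
    rw [hexp, hexp]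
    exact Fpoly_Jinv g p gj pj J hgJ hpJ hgjJ hpjJ hgJ2 hpJ2 hgjJ2 hpjJ2 X Y Z W
end
end
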